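/- Decomposition of directional derivatives: Let F:ℝᵈ→ℝ be given by F(x) = Σᵢ₌₁ⁿ fᵢ(x) where each fᵢ is a sum of (a) smooth terms in the coordinates indexed by a set E_X, and (b) terms of the form 2·cⱼ·‖x_{Aⱼ}‖ with cⱼ ≥ 0 where Aⱼ ∩ E_X = ∅ (x_{Aⱼ} the restriction to coordinates in Aⱼ). Then for any direction p, the one-sided directional derivative at a point x₀ supported on E_X satisfies F'(x₀; p) = F'(x₀; p_X) + F'(x₀; p_⊥), where p_X is the restriction of p to coordinates in E_X (extended by zero) and p_⊥ = p − p_X. -/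

import Mathlib

open Filter

/-- Decomposition of directional derivatives: for a function that is a sum of a
smooth part depending only on the coordinates in `EX` and norm terms
`2·cⱼ·‖x_{Aⱼ}‖` with `Aⱼ ∩ EX = ∅`, at a point `x₀` supported (with positive
entries) on `EX`, the one-sided directional derivative in direction `p` exists
and splits as the sum of the directional derivatives along the component of `p`
in the coordinates `EX` and the component perpendicular to them. -/
theorem directional_derivative_decomposition
    (d m : ℕ) (EX : Finset (Fin d))
    (c : Fin m → ℝ) (hc : ∀ j, 0 ≤ c j)
    (A : Fin m → Finset (Fin d)) (hA : ∀ j, Disjoint (A j) EX)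
    (G : (Fin d → ℝ) → ℝ)
    (hGdep : ∀ x y : Fin d → ℝ, (∀ e ∈ EX, x e = y e) → G x = G y)
    (x₀ : Fin d → ℝ) (hx₀supp : ∀ e, e ∉ EX → x₀ e = 0)
    (hx₀pos : ∀ e ∈ EX, 0 < x₀ e)
    (hGdiff : DifferentiableAt ℝ G x₀)
    (F : (Fin d → ℝ) → ℝ)
    (hF : ∀ x, F x = G x + ∑ j, 2 * c j * Real.sqrt (∑ e ∈ A j, x e ^ 2))
    (p : Fin d → ℝ) :
    ∃ L L₁ L₂ : ℝ,
      Tendsto (fun α : ℝ => (F (x₀ + α • p) - F x₀) / α)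
        (nhdsWithin 0 (Set.Ioi 0)) (nhds L) ∧
      Tendsto (fun α : ℝ =>
          (F (x₀ + α • (fun e => if e ∈ EX then p e else 0)) - F x₀) / α)
        (nhdsWithin 0 (Set.Ioi 0)) (nhds L₁) ∧
      Tendsto (fun α : ℝ =>
          (F (x₀ + α • (fun e => if e ∈ EX then 0 else p e)) - F x₀) / α)
        (nhdsWithin 0 (Set.Ioi 0)) (nhds L₂) ∧
      L = L₁ + L₂ := by
  classical
  set vX : Fin d → ℝ := fun e => if e ∈ EX then p e else 0 with hvX
  set vP : Fin d → ℝ := fun e => if e ∈ EX then 0 else p e with hvP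
  set S : ℝ := ∑ j, 2 * c j * Real.sqrt (∑ e ∈ A j, p e ^ 2) with hSdef
  set L₁ : ℝ := fderiv ℝ G x₀ vX with hL₁
  -- membership in A j implies not in EX
  have hAE : ∀ j, ∀ e ∈ A j, e ∉ EX := fun j e he hmem =>
    (Finset.disjoint_left.mp (hA j)) he hmem
  -- F x₀ = G x₀
  have hFx₀ : F x₀ = G x₀ := by
    rw [hF]
    have : ∀ j : Fin m, 2 * c j * Real.sqrt (∑ e ∈ A j, x₀ e ^ 2) = 0 := by
      intro j
      have : (∑ e ∈ A j, x₀ e ^ 2) = 0 := by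
        apply Finset.sum_eq_zero
        intro e he
        rw [hx₀supp e (hAE j e he)]; ring
      rw [this, Real.sqrt_zero, mul_zero]
    rw [Finset.sum_eq_zero (fun j _ => this j), add_zero]
  -- norm sums for α > 0 in general direction v with v = p on each A j
  have hsum : ∀ (v : Fin d → ℝ), (∀ j, ∀ e ∈ A j, v e = p e) → ∀ α : ℝ, 0 < α →
      (∑ j, 2 * c j * Real.sqrt (∑ e ∈ A j, (x₀ + α • v) e ^ 2)) = α * S := by
    intro v hv α hα
    rw [hSdef, Finset.mul_sum]
    apply Finset.sum_congr rfl
    intro j _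
    have h1 : (∑ e ∈ A j, (x₀ + α • v) e ^ 2) = α ^ 2 * ∑ e ∈ A j, p e ^ 2 := by
      rw [Finset.mul_sum]
      apply Finset.sum_congr rfl
      intro e he
      have : (x₀ + α • v) e = α * p e := by
        simp [hx₀supp e (hAE j e he), hv j e he]
      rw [this]; ring
    rw [h1, Real.sqrt_mul (sq_nonneg α), Real.sqrt_sq hα.le]
    ring
  -- G agrees along perpendicular / projected directions
  have hGX : ∀ α : ℝ, G (x₀ + α • p) = G (x₀ + α • vX) := by
    intro α
    apply hGdep
    intro e he
    simp [hvX, he]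
  have hGP : ∀ α : ℝ, G (x₀ + α • vP) = G x₀ := by
    intro α
    apply hGdep
    intro e he
    simp [hvP, he]
  -- key directional derivative of G along vX
  have hlin : HasDerivAt (fun α : ℝ => x₀ + α • vX) vX 0 := by
    simpa using ((hasDerivAt_id (0:ℝ)).smul_const vX).const_add x₀
  have hG0 : HasFDerivAt G (fderiv ℝ G x₀) ((fun α : ℝ => x₀ + α • vX) 0) := by
    simpa using hGdiff.hasFDerivAt
  have hcomp : HasDerivAt (fun α : ℝ => G (x₀ + α • vX)) L₁ 0 :=
    hG0.comp_hasDerivAt 0 hlin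
  have hGder : Tendsto (fun α : ℝ => (G (x₀ + α • vX) - G x₀) / α)
      (nhdsWithin 0 (Set.Ioi 0)) (nhds L₁) := by
    rw [hasDerivAt_iff_tendsto_slope] at hcomp
    have hmono : nhdsWithin (0:ℝ) (Set.Ioi 0) ≤ nhdsWithin 0 {(0:ℝ)}ᶜ :=
      nhdsWithin_mono _ (fun x hx => ne_of_gt hx)
    refine (hcomp.mono_left hmono).congr (fun α => ?_)
    simp [slope_def_field, div_eq_mul_inv, mul_comm]
  -- the three tendsto goals
  refine ⟨L₁ + S, L₁, S, ?_, ?_, ?_, rfl⟩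
  · refine ((hGder.add_const S)).congr' ?_
    filter_upwards [self_mem_nhdsWithin] with α (hα : (0:ℝ) < α)
    rw [hF (x₀ + α • p), hGX α, hsum p (fun j e _ => rfl) α hα, hFx₀]
    field_simp
    ring
  · refine hGder.congr fun α => ?_
    rw [hF (x₀ + α • vX), hFx₀]
    congr 2
    have : (∑ j, 2 * c j * Real.sqrt (∑ e ∈ A j, (x₀ + α • vX) e ^ 2)) = 0 := by
      apply Finset.sum_eq_zero
      intro j _
      have : (∑ e ∈ A j, (x₀ + α • vX) e ^ 2) = 0 := by
        apply Finset.sum_eq_zero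
        intro e he
        have hne := hAE j e he
        simp [hvX, hne, hx₀supp e hne]
      rw [this, Real.sqrt_zero, mul_zero]
    rw [this, add_zero]
  · refine tendsto_const_nhds.congr' ?_
    filter_upwards [self_mem_nhdsWithin] with α (hα : (0:ℝ) < α)
    have hv : ∀ j, ∀ e ∈ A j, vP e = p e := by
      intro j e he
      simp [hvP, hAE j e he]
    rw [hF (x₀ + α • vP), hGP α, hsum vP hv α hα, hFx₀]
    field_simp
    ring
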